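/- arXiv:2508.05214 — 2 statements merged into one kernel-verified Lean document; each statement's English description precedes it below -/
import Mathlib

section
/- Suppose E, Y ∈ ℝ^{n×n} are symmetric with Y positive semidefinite satisfying dual Lyapunov equations FᵀE + EF + GᵀEG + 2ΔαP′ = 0 and FY + YFᵀ + GYGᵀ + Σ₀ = 0, where P′ is symmetric, Δα ≥ 0, and Σ₀ is symmetric. Then Tr(EΣ₀) = Tr(2ΔαP′Y) ≤ 2Δα·λₙ(P′)·Tr(Y), provided P′ is positive semidefinite. -/
open Matrix

/-- Smallest eigenvalue of a real symmetric matrix. -/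
noncomputable def minEig {n : ℕ} {M : Matrix (Fin n) (Fin n) ℝ} (hM : M.IsHermitian) : ℝ :=
  ⨅ i, hM.eigenvalues i

/-- Largest eigenvalue of a real symmetric matrix. -/
noncomputable def maxEig {n : ℕ} {M : Matrix (Fin n) (Fin n) ℝ} (hM : M.IsHermitian) : ℝ :=
  ⨆ i, hM.eigenvalues i

lemma diag_nonneg' {n : ℕ} {M : Matrix (Fin n) (Fin n) ℝ} (hM : M.PosSemidef) (i : Fin n) :
    0 ≤ M i i := by
  have := hM.diag_nonneg (i := i)
  simpa [dotProduct, mulVec, Pi.single_apply] using this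

lemma trace_mul_le_maxEig {n : ℕ} {P Y : Matrix (Fin n) (Fin n) ℝ} (hP : P.PosSemidef)
    (hY : Y.PosSemidef) : (P * Y).trace ≤ maxEig hP.1 * Y.trace := by
  rcases Nat.eq_zero_or_pos n with hn | hn
  · subst hn; simp [trace]
  have : Nonempty (Fin n) := ⟨⟨0, hn⟩⟩
  set U : Matrix (Fin n) (Fin n) ℝ := (hP.1.eigenvectorUnitary : Matrix (Fin n) (Fin n) ℝ)
  have hU : U ∈ Matrix.unitaryGroup (Fin n) ℝ := hP.1.eigenvectorUnitary.2
  set M : Matrix (Fin n) (Fin n) ℝ := star U * Y * U with hM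
  have hMps : M.PosSemidef := hY.conjTranspose_mul_mul_same U
  have hspec := hP.1.spectral_theorem
  rw [Unitary.conjStarAlgAut_apply] at hspec
  have key : (P * Y).trace = ∑ i, hP.1.eigenvalues i * M i i := by
    calc (P * Y).trace
        = (U * diagonal (RCLike.ofReal ∘ hP.1.eigenvalues) * star U * Y).trace := by rw [← hspec]
      _ = (diagonal (RCLike.ofReal ∘ hP.1.eigenvalues) * M).trace := by
          rw [hM, mul_assoc, mul_assoc, trace_mul_comm, mul_assoc]
      _ = ∑ i, hP.1.eigenvalues i * M i i := by
          simp [trace, diag_apply, diagonal_mul]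
  have hbdd : BddAbove (Set.range hP.1.eigenvalues) := Set.Finite.bddAbove (Set.finite_range _)
  have hle : ∀ i, hP.1.eigenvalues i ≤ maxEig hP.1 := fun i => le_ciSup hbdd i
  have hYtr : Y.trace = ∑ i, M i i := by
    have : M.trace = Y.trace := by
      rw [hM, ← trace_mul_cycle, mul_assoc, (Matrix.mem_unitaryGroup_iff).mp hU, mul_one]
    rw [← this]; rfl
  rw [key, hYtr, Finset.mul_sum]
  apply Finset.sum_le_sum
  intro i _
  exact mul_le_mul_of_nonneg_right (hle i) (diag_nonneg' hMps i)

theorem stmt_11 {n : ℕ} (F G E Y P' S₀ : Matrix (Fin n) (Fin n) ℝ)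
    (hE : E.IsHermitian) (hY : Y.PosSemidef) (hP' : P'.PosSemidef) (hS : S₀.IsHermitian)
    (Δα : ℝ) (hΔ : 0 ≤ Δα)
    (h1 : Fᵀ * E + E * F + Gᵀ * E * G + (2 * Δα) • P' = 0)
    (h2 : F * Y + Y * Fᵀ + G * Y * Gᵀ + S₀ = 0) :
    (E * S₀).trace = ((2 * Δα) • (P' * Y)).trace ∧
      ((2 * Δα) • (P' * Y)).trace ≤ 2 * Δα * maxEig hP'.1 * Y.trace := by
  constructor
  · have e1 : (E * (F * Y + Y * Fᵀ + G * Y * Gᵀ + S₀)).trace = 0 := by rw [h2]; simp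
    have e2 : ((Fᵀ * E + E * F + Gᵀ * E * G + (2 * Δα) • P') * Y).trace = 0 := by rw [h1]; simp
    simp only [Matrix.mul_add, Matrix.add_mul, trace_add, Matrix.smul_mul] at e1 e2
    have c1 : (E * (F * Y)).trace = (E * F * Y).trace := by rw [mul_assoc]
    have c2 : (E * (Y * Fᵀ)).trace = (Fᵀ * E * Y).trace := by
      rw [← mul_assoc, trace_mul_cycle, mul_assoc]
    have c3 : (E * (G * Y * Gᵀ)).trace = (Gᵀ * E * G * Y).trace := by
      rw [← mul_assoc, trace_mul_cycle, ← mul_assoc]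
    linarith [e1, e2, c1, c2, c3]
  · have h := trace_mul_le_maxEig hP' hY
    rw [trace_smul, smul_eq_mul]
    calc 2 * Δα * (P' * Y).trace ≤ 2 * Δα * (maxEig hP'.1 * Y.trace) := by
          apply mul_le_mul_of_nonneg_left h (by linarith)
      _ = 2 * Δα * maxEig hP'.1 * Y.trace := by ring
end

section
/- Let K ∈ ℝ^{m×n}, and suppose Q ∈ 𝕊ⁿ₊, R ∈ 𝕊ᵐ₊, Σ₀ ∈ 𝕊ⁿ₊ are positive definite, and P ∈ 𝕊ⁿ₊ solves the Lyapunov equation (A_α+BK)ᵀP + P(A_α+BK) + (C+DK)ᵀP(C+DK) + Q + KᵀRK = 0 with n ≥ 2. If Δα satisfies 0 ≤ Δα ≤ λ₁(Σ₀)λ₁(Q)/(2·Tr(PΣ₀)), then 2ΔαP ≺ Q + KᵀRK. -/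
open Matrix

namespace Aux

variable {n : ℕ}

lemma trace_eq_sum_eig {M : Matrix (Fin n) (Fin n) ℝ} (hM : M.IsHermitian) :
    M.trace = ∑ i, hM.eigenvalues i := by
  rw [hM.trace_eq_sum_eigenvalues]
  simp

lemma psd_trace_nonneg {M : Matrix (Fin n) (Fin n) ℝ} (hM : M.PosSemidef) :
    0 ≤ M.trace := by
  rw [trace_eq_sum_eig hM.1]
  exact Finset.sum_nonneg fun i _ => hM.eigenvalues_nonneg i

open scoped MatrixOrder in
lemma trace_mul_nonneg {P E : Matrix (Fin n) (Fin n) ℝ} (hP : P.PosSemidef)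
    (hE : E.PosSemidef) : 0 ≤ (P * E).trace := by
  have h1 : P = CFC.sqrt P * CFC.sqrt P := (CFC.sqrt_mul_sqrt_self P hP.nonneg).symm
  rw [h1, Matrix.mul_assoc, Matrix.trace_mul_comm]
  have h2 : ((CFC.sqrt P * E) * CFC.sqrt P) = CFC.sqrt P * E * (CFC.sqrt P)ᴴ := by
    rw [(CFC.sqrt_nonneg P).posSemidef.1]
  rw [h2]
  exact psd_trace_nonneg (hE.mul_mul_conjTranspose_same (CFC.sqrt P))

lemma sub_smul_one_psd {M : Matrix (Fin n) (Fin n) ℝ} (hM : M.IsHermitian) {c : ℝ}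
    (hc : ∀ i, c ≤ hM.eigenvalues i) : (M - c • 1).PosSemidef := by
  set U := (hM.eigenvectorUnitary : Matrix (Fin n) (Fin n) ℝ) with hUdef
  have hU : U * star U = 1 := Matrix.mem_unitaryGroup_iff.mp hM.eigenvectorUnitary.2
  have key : M - c • 1 = U * Matrix.diagonal (fun i => hM.eigenvalues i - c) * Uᴴ := by
    have hd : Matrix.diagonal (fun i => hM.eigenvalues i - c)
        = Matrix.diagonal (RCLike.ofReal ∘ hM.eigenvalues) -
          c • (1 : Matrix (Fin n) (Fin n) ℝ) := by
      rw [Matrix.smul_one_eq_diagonal, ← Matrix.diagonal_sub]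
      congr 1
    rw [hd, ← Matrix.star_eq_conjTranspose]
    simp only [mul_sub, sub_mul, Matrix.mul_smul, Matrix.smul_mul, mul_one, hU,
      ← hM.spectral_theorem]
    conv_lhs => rw [hM.spectral_theorem, Unitary.conjStarAlgAut_apply]
  rw [key, ← Matrix.star_eq_conjTranspose]
  exact (Matrix.PosSemidef.diagonal fun i => sub_nonneg.2 (hc i)).mul_mul_conjTranspose_same U

lemma smul_one_sub_psd {M : Matrix (Fin n) (Fin n) ℝ} (hM : M.IsHermitian) {c : ℝ}
    (hc : ∀ i, hM.eigenvalues i ≤ c) : (c • 1 - M).PosSemidef := by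
  set U := (hM.eigenvectorUnitary : Matrix (Fin n) (Fin n) ℝ) with hUdef
  have hU : U * star U = 1 := Matrix.mem_unitaryGroup_iff.mp hM.eigenvectorUnitary.2
  have key : c • 1 - M = U * Matrix.diagonal (fun i => c - hM.eigenvalues i) * Uᴴ := by
    have hd : Matrix.diagonal (fun i => c - hM.eigenvalues i)
        = c • (1 : Matrix (Fin n) (Fin n) ℝ) -
          Matrix.diagonal (RCLike.ofReal ∘ hM.eigenvalues) := by
      rw [Matrix.smul_one_eq_diagonal, ← Matrix.diagonal_sub]
      congr 1
    rw [hd, ← Matrix.star_eq_conjTranspose]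
    simp only [mul_sub, sub_mul, Matrix.mul_smul, Matrix.smul_mul, mul_one, hU,
      ← hM.spectral_theorem]
    conv_lhs => rw [hM.spectral_theorem, Unitary.conjStarAlgAut_apply]
  rw [key, ← Matrix.star_eq_conjTranspose]
  exact (Matrix.PosSemidef.diagonal fun i => sub_nonneg.2 (hc i)).mul_mul_conjTranspose_same U

lemma psd_smul {M : Matrix (Fin n) (Fin n) ℝ} (hM : M.PosSemidef) {c : ℝ} (hc : 0 ≤ c) :
    (c • M).PosSemidef := by
  refine ⟨by unfold Matrix.IsHermitian; rw [Matrix.conjTranspose_smul, hM.1]; simp, fun x => ?_⟩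
  exact (hM.smul hc).2 x

end Aux

theorem stmt_15' {n m : ℕ} (hn : 2 ≤ n) (A C : Matrix (Fin n) (Fin n) ℝ)
    (B D : Matrix (Fin n) (Fin m) ℝ) (K : Matrix (Fin m) (Fin n) ℝ)
    (P Q S₀ : Matrix (Fin n) (Fin n) ℝ) (R : Matrix (Fin m) (Fin m) ℝ)
    (hP : P.PosDef) (hQ : Q.PosDef) (hR : R.PosDef) (hS : S₀.PosDef)
    (α : ℝ)
    (hLyap : ((A - α • (1 : Matrix (Fin n) (Fin n) ℝ)) + B * K)ᵀ * P
        + P * ((A - α • (1 : Matrix (Fin n) (Fin n) ℝ)) + B * K)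
        + (C + D * K)ᵀ * P * (C + D * K) + Q + Kᵀ * R * K = 0)
    (Δα : ℝ) (hΔ₀ : 0 ≤ Δα)
    (hΔ : Δα ≤ (⨅ i, hS.1.eigenvalues i) * (⨅ i, hQ.1.eigenvalues i) / (2 * (P * S₀).trace)) :
    (Q + Kᵀ * R * K - (2 * Δα) • P).PosDef := by
  have : Nonempty (Fin n) := ⟨⟨0, by omega⟩⟩
  set s := ⨅ i, hS.1.eigenvalues i with hsdef
  set q := ⨅ i, hQ.1.eigenvalues i with hqdef
  set p := ⨆ i, hP.1.eigenvalues i with hpdef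
  set T := (P * S₀).trace with hTdef
  have hbddS : BddBelow (Set.range hS.1.eigenvalues) := Set.Finite.bddBelow (Set.finite_range _)
  have hbddQ : BddBelow (Set.range hQ.1.eigenvalues) := Set.Finite.bddBelow (Set.finite_range _)
  have hbddP : BddAbove (Set.range hP.1.eigenvalues) := Set.Finite.bddAbove (Set.finite_range _)
  have hs : 0 < s := by
    obtain ⟨i, hi⟩ := exists_eq_ciInf_of_finite (f := hS.1.eigenvalues)
    rw [hsdef, ← hi]; exact hS.eigenvalues_pos i
  have hq : 0 < q := by
    obtain ⟨i, hi⟩ := exists_eq_ciInf_of_finite (f := hQ.1.eigenvalues)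
    rw [hqdef, ← hi]; exact hQ.eigenvalues_pos i
  -- trace P > p
  obtain ⟨i₀, hi₀⟩ := exists_eq_ciSup_of_finite (f := hP.1.eigenvalues)
  have hp : 0 < p := by rw [hpdef, ← hi₀]; exact hP.eigenvalues_pos i₀
  have htrP : p < P.trace := by
    rw [Aux.trace_eq_sum_eig hP.1, ← Finset.add_sum_erase _ _ (Finset.mem_univ i₀)]
    have : Nontrivial (Fin n) := Fin.nontrivial_iff_two_le.mpr hn
    obtain ⟨j, hj⟩ := exists_ne i₀
    have hpos : 0 < ∑ x ∈ Finset.univ.erase i₀, hP.1.eigenvalues x :=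
      Finset.sum_pos (fun i _ => hP.eigenvalues_pos i)
        ⟨j, Finset.mem_erase.mpr ⟨hj, Finset.mem_univ j⟩⟩
    rw [hpdef, ← hi₀]
    linarith
  -- T ≥ s * trace P
  have hTs : s * P.trace ≤ T := by
    have hpsd : (S₀ - s • 1).PosSemidef :=
      Aux.sub_smul_one_psd hS.1 fun i => ciInf_le hbddS i
    have h0 : 0 ≤ (P * (S₀ - s • 1)).trace := Aux.trace_mul_nonneg hP.posSemidef hpsd
    rw [Matrix.mul_sub, Matrix.trace_sub, Matrix.mul_smul, Matrix.mul_one,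
      Matrix.trace_smul] at h0
    simp only [smul_eq_mul] at h0
    linarith
  have hsp : s * p < T := lt_of_lt_of_le (by nlinarith) hTs
  have hT : 0 < T := lt_trans (by positivity) hsp
  -- key scalar inequality
  have key : 2 * Δα * p < q := by
    rcases eq_or_lt_of_le hΔ₀ with h0 | hΔpos
    · rw [← h0]; simpa using hq
    · have h2 : Δα * (2 * T) ≤ s * q :=
        (le_div_iff₀ (by linarith : (0:ℝ) < 2 * T)).mp hΔ
      nlinarith
  -- assemble
  have h1 : (Q - q • 1).PosSemidef := Aux.sub_smul_one_psd hQ.1 fun i => ciInf_le hbddQ i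
  have h2 : (Kᵀ * R * K).PosSemidef := by
    rw [← Matrix.conjTranspose_eq_transpose_of_trivial]
    exact hR.posSemidef.conjTranspose_mul_mul_same K
  have h3 : ((2 * Δα) • (p • (1 : Matrix (Fin n) (Fin n) ℝ) - P)).PosSemidef :=
    Aux.psd_smul (Aux.smul_one_sub_psd hP.1 fun i => le_ciSup hbddP i) (by linarith)
  have h4 : ((q - 2 * Δα * p) • (1 : Matrix (Fin n) (Fin n) ℝ)).PosDef := by
    rw [Matrix.smul_one_eq_diagonal]
    exact Matrix.posDef_diagonal_iff.mpr fun i => by linarith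
  have hEq : Q + Kᵀ * R * K - (2 * Δα) • P
      = ((Q - q • 1) + Kᵀ * R * K + (2 * Δα) • (p • (1 : Matrix (Fin n) (Fin n) ℝ) - P))
        + (q - 2 * Δα * p) • (1 : Matrix (Fin n) (Fin n) ℝ) := by
    module
  rw [hEq]
  exact Matrix.PosDef.posSemidef_add ((h1.add h2).add h3) h4

theorem stmt_15 {n m : ℕ} (hn : 2 ≤ n) (A C : Matrix (Fin n) (Fin n) ℝ)
    (B D : Matrix (Fin n) (Fin m) ℝ) (K : Matrix (Fin m) (Fin n) ℝ)
    (P Q S₀ : Matrix (Fin n) (Fin n) ℝ) (R : Matrix (Fin m) (Fin m) ℝ)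
    (hP : P.PosDef) (hQ : Q.PosDef) (hR : R.PosDef) (hS : S₀.PosDef)
    (α : ℝ)
    (hLyap : ((A - α • (1 : Matrix (Fin n) (Fin n) ℝ)) + B * K)ᵀ * P
        + P * ((A - α • (1 : Matrix (Fin n) (Fin n) ℝ)) + B * K)
        + (C + D * K)ᵀ * P * (C + D * K) + Q + Kᵀ * R * K = 0)
    (Δα : ℝ) (hΔ₀ : 0 ≤ Δα)
    (hΔ : Δα ≤ minEig hS.1 * minEig hQ.1 / (2 * (P * S₀).trace)) :
    (Q + Kᵀ * R * K - (2 * Δα) • P).PosDef :=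
  stmt_15' hn A C B D K P Q S₀ R hP hQ hR hS α hLyap Δα hΔ₀ hΔ
end
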